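/- Fix an integer k ≥ 2 and let φ_k^min = arccos(1 − (2 − 2cos(π/(2k+1)))/(1 − cos(π/(2k−1)))). Then for every φ ∈ (φ_k^min, π], the function λ ↦ P_k^φ(λ) has no local minimum point in Λ_k = [sin²(π/(4k+2)), sin²(π/(4k−2))). -/

import Mathlib

/-- The success probability `P_k^φ(λ)` of the matched-phase Grover algorithm after
`k` iterations: `P_k^φ(λ) = A·cos((2k+1)δ) + B` where `θ = arcsin √λ`,
`δ = arccos (1 − λ(1 − cos φ))`, `A = (sin²θ/sin²δ)(cos φ − cos δ)` and
`B = (sin²θ/sin²δ)(1 − cos φ·cos δ)`. -/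
noncomputable def grovP (k : ℕ) (φ lam : ℝ) : ℝ :=
  let θ : ℝ := Real.arcsin (Real.sqrt lam)
  let δ : ℝ := Real.arccos (1 - lam * (1 - Real.cos φ))
  let A : ℝ := Real.sin θ ^ 2 / Real.sin δ ^ 2 * (Real.cos φ - Real.cos δ)
  let B : ℝ := Real.sin θ ^ 2 / Real.sin δ ^ 2 * (1 - Real.cos φ * Real.cos δ)
  A * Real.cos ((2 * (k : ℝ) + 1) * δ) + B

/-- `φ_k^min = arccos(1 − (2 − 2cos(π/(2k+1)))/(1 − cos(π/(2k−1))))`. -/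
noncomputable def phiMin (k : ℕ) : ℝ :=
  Real.arccos (1 - (2 - 2 * Real.cos (Real.pi / (2 * (k : ℝ) + 1))) /
    (1 - Real.cos (Real.pi / (2 * (k : ℝ) - 1))))


noncomputable def Gc (m p d : ℝ) : ℝ :=
  ((p - Real.cos d) * Real.cos (m * d) + 1 - p * Real.cos d) / (1 + Real.cos d)

lemma grovP_eq' (m p lam : ℝ) (hp : -1 ≤ p) (hp1 : p < 1) (h0 : 0 < lam) (h1 : lam < 1) :
    lam / Real.sin (Real.arccos (1 - lam * (1 - p))) ^ 2 * (p - Real.cos (Real.arccos (1 - lam * (1 - p)))) *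
        Real.cos (m * Real.arccos (1 - lam * (1 - p))) +
      lam / Real.sin (Real.arccos (1 - lam * (1 - p))) ^ 2 * (1 - p * Real.cos (Real.arccos (1 - lam * (1 - p)))) =
    Gc m p (Real.arccos (1 - lam * (1 - p))) / (1 - p) := by
  have hc0 : 0 < 1 - p := by linarith
  have hc2 : 1 - p ≤ 2 := by linarith
  have harg1 : -1 ≤ 1 - lam * (1 - p) := by nlinarith
  have harg2 : 1 - lam * (1 - p) ≤ 1 := by nlinarith
  set d := Real.arccos (1 - lam * (1 - p)) with hd
  have hu : Real.cos d = 1 - lam * (1 - p) := Real.cos_arccos harg1 harg2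
  have hsin : Real.sin d ^ 2 = 1 - Real.cos d ^ 2 := by
    have := Real.sin_sq_add_cos_sq d; linarith
  rw [Gc, hu, hsin, hu]
  have h1u : (0:ℝ) < 1 + (1 - lam * (1-p)) := by nlinarith
  have h2u : (0:ℝ) < 1 - (1 - lam * (1-p)) := by nlinarith
  have hne : 1 - (1 - lam*(1-p))^2 ≠ 0 := by nlinarith
  field_simp
  ring


lemma hasDerivAt_Gc (m p d : ℝ) (h : 1 + Real.cos d ≠ 0) :
    HasDerivAt (Gc m p)
      (((1 + p) * Real.sin d * (1 + Real.cos (m * d)) +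
        m * (Real.cos d - p) * (1 + Real.cos d) * Real.sin (m * d)) / (1 + Real.cos d) ^ 2) d := by
  have hN : HasDerivAt (fun d => (p - Real.cos d) * Real.cos (m * d) + 1 - p * Real.cos d)
      (Real.sin d * Real.cos (m * d) + (p - Real.cos d) * (-(m * Real.sin (m * d)))
        + p * Real.sin d) d := by
    have h1 : HasDerivAt (fun d : ℝ => p - Real.cos d) (Real.sin d) d := by
      simpa using (Real.hasDerivAt_cos d).const_sub p
    have h2 : HasDerivAt (fun d : ℝ => Real.cos (m * d)) (-(m * Real.sin (m * d))) d := by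
      have := (Real.hasDerivAt_cos (m * d)).comp d ((hasDerivAt_id d).const_mul m)
      exact this.congr_deriv (by ring)
    have h3 : HasDerivAt (fun d : ℝ => p * Real.cos d) (p * (-Real.sin d)) d :=
      (Real.hasDerivAt_cos d).const_mul p
    have := ((h1.mul h2).add_const 1).sub h3
    refine this.congr_deriv ?_
    ring
  have hD : HasDerivAt (fun d : ℝ => 1 + Real.cos d) (-Real.sin d) d := by
    simpa using (Real.hasDerivAt_cos d).const_add 1
  have := hN.div hD h
  refine this.congr_deriv ?_
  field_simp
  ring


lemma E_pos (m p d : ℝ) (hm : 1 ≤ m) (hp1 : -1 ≤ p) (hpd : p < Real.cos d)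
    (hd0 : 0 < d) (hmd : m * d < Real.pi) :
    0 < (1 + p) * Real.sin d * (1 + Real.cos (m * d)) +
        m * (Real.cos d - p) * (1 + Real.cos d) * Real.sin (m * d) := by
  have hdπ : d < Real.pi := by nlinarith
  have hs : 0 < Real.sin d := Real.sin_pos_of_pos_of_lt_pi hd0 hdπ
  have hS : 0 < Real.sin (m * d) := Real.sin_pos_of_pos_of_lt_pi (by positivity) hmd
  have hC : -1 ≤ Real.cos (m * d) := Real.neg_one_le_cos (m * d)
  have hu : -1 ≤ Real.cos d := Real.neg_one_le_cos d
  have h1 : 0 ≤ (1 + p) * Real.sin d * (1 + Real.cos (m * d)) := by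
    apply mul_nonneg (mul_nonneg (by linarith) hs.le) (by linarith)
  have h2 : 0 < m * (Real.cos d - p) * (1 + Real.cos d) * Real.sin (m * d) := by
    have : 0 < 1 + Real.cos d := by
      have := Real.cos_lt_cos_of_nonneg_of_le_pi hd0.le le_rfl hdπ
      simp [Real.cos_pi] at this; linarith
    exact mul_pos (mul_pos (mul_pos (by linarith : (0:ℝ) < m) (by linarith : (0:ℝ) < Real.cos d - p)) this) hS
  linarith


lemma sqrt3_gt : (1.732 : ℝ) < Real.sqrt 3 := by
  have : ((1.732 : ℝ)) ^ 2 < 3 := by norm_num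
  nlinarith [Real.sq_sqrt (by norm_num : (3:ℝ) ≥ 0), Real.sqrt_nonneg 3]

lemma key_ineq (m : ℝ) (hm' : m = 5 ∨ 7 ≤ m) :
    Real.pi < 3 * Real.sqrt 3 / 8 * m * (m - 2) * Real.sin (Real.pi / (2 * m)) +
      Real.pi * Real.sin (Real.pi / (2 * m)) ^ 2 := by
  have hπ4 : Real.pi < 3.1416 := Real.pi_lt_d4
  have hπ3 : 3.1415 < Real.pi := Real.pi_gt_d4
  have hm : (5:ℝ) ≤ m := by rcases hm' with h | h <;> linarith
  have hm0 : (0:ℝ) < m := by linarith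
  set t := Real.pi / (2 * m) with ht
  have ht0 : 0 < t := by positivity
  have htm : 2 * m * t = Real.pi := by rw [ht]; field_simp
  have ht1 : t ≤ Real.pi / 10 := by
    rw [ht, div_le_div_iff₀ (by linarith) (by norm_num)]
    nlinarith
  have htle : t ≤ 1 := by nlinarith
  have hsin : t - t ^ 3 / 4 < Real.sin t := by linarith [Real.sin_gt_sub_cube ht0, pow_pos ht0 3]
  have hs0 : 0 < Real.sin t := Real.sin_pos_of_pos_of_lt_pi ht0 (by nlinarith)
  have hs1 : Real.sin t ≤ 1 := Real.sin_le_one t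
  have hsqrt := sqrt3_gt
  rcases hm' with hm5 | hm7
  · -- m = 5
    subst hm5
    have ht_lb : 0.31415 < t := by rw [ht]; norm_num; linarith
    have ht_ub : t ≤ 0.31416 := by rw [ht]; norm_num; linarith
    have ht3 : t ^ 3 ≤ (0.31416:ℝ) ^ 3 := pow_le_pow_left₀ ht0.le ht_ub 3
    have hst : (0.3063:ℝ) < Real.sin t := by nlinarith
    nlinarith [mul_nonneg (by linarith : (0:ℝ) ≤ Real.sqrt 3 - 1.732)
        (by linarith : (0:ℝ) ≤ Real.sin t - 0.3063),
      mul_pos hs0 hs0, sq_nonneg (Real.sin t - 0.3063)]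
  · -- m ≥ 7
    have hts2 : t ^ 2 ≤ 1 := by nlinarith
    have hs34 : 3 / 4 * t < Real.sin t := by nlinarith
    have hA : (0:ℝ) ≤ 3 * Real.sqrt 3 / 8 * m * (m - 2) :=
      mul_nonneg (mul_nonneg (by positivity) hm0.le) (by linarith)
    have h1 : Real.pi < 3 * Real.sqrt 3 / 8 * m * (m - 2) * (3 / 4 * t) := by
      rw [← htm]
      have h64 : (64 : ℝ) < 9 * Real.sqrt 3 * (m - 2) := by nlinarith
      nlinarith [mul_pos hm0 ht0]
    nlinarith [mul_nonneg hA (by linarith : (0:ℝ) ≤ Real.sin t - 3 / 4 * t),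
      mul_nonneg Real.pi_pos.le (sq_nonneg (Real.sin t))]



set_option maxHeartbeats 2000000 in
lemma bracket_core (m P s2 sx cx sy cy u p : ℝ)
    (hm2 : 3 ≤ m - 2) (hm0 : 0 < m) (hP : 0 < P)
    (hs2 : 0 < s2) (hs2le : s2 ≤ 1)
    (hsx : 0 < sx) (hcy1 : -1 ≤ cy)
    (h1p : 1 + p = 2 * (1 - s2 ^ 2))
    (h2m : 2 * (m - 2) * sx < s2 * P)
    (hKey2 : P * (1 - s2 ^ 2) < 3 * Real.sqrt 3 / 8 * m * (m - 2) * s2)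
    (hup : 3 / 2 * s2 ^ 2 < u - p)
    (hcx : Real.sqrt 3 / 2 < cx) (hsy : 1 / 2 < sy) :
    0 < (1 + p) * sx * cy + m * (u - p) * cx * sy := by
  have hps : p = 1 - 2 * s2 ^ 2 := by linarith
  subst hps
  have hs2sq : s2 ^ 2 ≤ 1 := by
    have := mul_le_mul hs2le hs2le hs2.le zero_le_one
    linarith [this]
  have hA : (m - 2) * ((1 + (1 - 2 * s2 ^ 2)) * sx * (-cy)) ≤
      (m - 2) * ((1 + (1 - 2 * s2 ^ 2)) * sx) := by
    have hh := mul_nonneg (mul_nonneg (mul_nonneg (by linarith : (0:ℝ) ≤ m - 2)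
      (by linarith : (0:ℝ) ≤ 2 - 2 * s2 ^ 2)) hsx.le) (by linarith : (0:ℝ) ≤ 1 + cy)
    linarith [hh]
  have hB : (m - 2) * ((1 + (1 - 2 * s2 ^ 2)) * sx) ≤ (1 - s2 ^ 2) * (P * s2) := by
    have hh := mul_nonneg (by linarith : (0:ℝ) ≤ 1 - s2 ^ 2)
      (by linarith : (0:ℝ) ≤ s2 * P - 2 * (m - 2) * sx)
    linarith [hh]
  have hC : (1 - s2 ^ 2) * (P * s2) < 3 * Real.sqrt 3 / 8 * m * (m - 2) * s2 ^ 2 := by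
    have hh := mul_lt_mul_of_pos_right hKey2 hs2
    linarith [hh]
  have hD : 3 * Real.sqrt 3 / 8 * m * (m - 2) * s2 ^ 2 <
      (m - 2) * (m * (u - (1 - 2 * s2 ^ 2)) * cx * sy) := by
    have h1 : 3 / 2 * s2 ^ 2 * (Real.sqrt 3 / 2) < (u - (1 - 2 * s2 ^ 2)) * cx :=
      mul_lt_mul'' hup hcx (by positivity) (by positivity)
    have h2 : 3 / 2 * s2 ^ 2 * (Real.sqrt 3 / 2) * (1 / 2) <
        (u - (1 - 2 * s2 ^ 2)) * cx * sy :=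
      mul_lt_mul'' h1 hsy (by positivity) (by norm_num)
    have hh := mul_lt_mul_of_pos_left h2 (mul_pos hm0 (by linarith : (0:ℝ) < m - 2))
    linarith [hh]
  have h5 : 0 < (m - 2) * ((1 + (1 - 2 * s2 ^ 2)) * sx * cy +
      m * (u - (1 - 2 * s2 ^ 2)) * cx * sy) := by linarith [hA, hB, hC, hD]
  by_contra hT0
  push_neg at hT0
  linarith [mul_nonneg (by linarith : (0:ℝ) ≤ m - 2) (by linarith :
    (0:ℝ) ≤ -((1 + (1 - 2 * s2 ^ 2)) * sx * cy + m * (u - (1 - 2 * s2 ^ 2)) * cx * sy))]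

set_option maxHeartbeats 1000000 in
lemma E_neg (m φ d lam : ℝ) (hm : 5 ≤ m) (hφ0 : 0 < φ) (hφπ : φ ≤ Real.pi)
    (hlam0 : 0 < lam) (hlamR : lam < Real.sin (Real.pi / (2 * (m - 2))) ^ 2)
    (hcosd : Real.cos d = 1 - lam * (1 - Real.cos φ))
    (hd0 : 0 < d) (hdπ : d < Real.pi) (hmd : Real.pi < m * d)
    (hKey : Real.pi < 3 * Real.sqrt 3 / 8 * m * (m - 2) * Real.sin (Real.pi / (2 * m)) +
      Real.pi * Real.sin (Real.pi / (2 * m)) ^ 2) :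
    (1 + Real.cos φ) * Real.sin d * (1 + Real.cos (m * d)) +
      m * (Real.cos d - Real.cos φ) * (1 + Real.cos d) * Real.sin (m * d) < 0 := by
  have hπ := Real.pi_pos
  have hm0 : (0:ℝ) < m := by linarith
  have hm2 : (3:ℝ) ≤ m - 2 := by linarith
  set p := Real.cos φ with hp
  set s2 := Real.sin (φ / 2) with hs2
  set Rt := Real.sin (Real.pi / (2 * (m - 2))) with hRt
  set x := d / 2 with hx
  set y := m * d / 2 with hy
  -- basic facts about φ
  have hs2pos : 0 < s2 := Real.sin_pos_of_pos_of_lt_pi (by linarith) (by linarith)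
  have hs2le1 : s2 ≤ 1 := Real.sin_le_one _
  have hcosφ : p = 1 - 2 * s2 ^ 2 := by
    have h := Real.cos_two_mul (φ / 2)
    have h2 := Real.sin_sq_add_cos_sq (φ / 2)
    rw [show 2 * (φ / 2) = φ by ring] at h
    rw [hp, h, hs2]; linarith
  -- facts about Rt
  have hfrac : 0 < Real.pi / (2 * (m - 2)) := by positivity
  have hmarg : Real.pi / (2 * (m - 2)) ≤ Real.pi / 6 := by
    rw [div_le_div_iff₀ (by linarith) (by norm_num)]
    have := mul_nonneg hπ.le (by linarith : (0:ℝ) ≤ 2 * m - 10)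
    linarith
  have hRtpos : 0 < Rt := Real.sin_pos_of_pos_of_lt_pi hfrac
    (lt_of_le_of_lt hmarg (by linarith))
  have hRt_half : Rt ≤ 1 / 2 := by
    rw [hRt, ← Real.sin_pi_div_six]
    exact Real.sin_le_sin_of_le_of_le_pi_div_two (by linarith) (by linarith) hmarg
  have hRt_lt : Rt ≤ Real.pi / (2 * (m - 2)) := Real.sin_le (by positivity)
  -- sin x
  have hxpos : 0 < x := by rw [hx]; linarith
  have hxpi2 : x < Real.pi / 2 := by rw [hx]; linarith
  have hsxpos : 0 < Real.sin x := Real.sin_pos_of_pos_of_lt_pi hxpos (by linarith)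
  have hsx_sq : Real.sin x ^ 2 = lam * s2 ^ 2 := by
    have h := Real.cos_two_mul x
    have h2 := Real.sin_sq_add_cos_sq x
    rw [show 2 * x = d by rw [hx]; ring] at h
    rw [hcosd, hcosφ] at h
    linarith
  have hsx_lt : Real.sin x < s2 * Rt := by
    have hsq : Real.sin x ^ 2 < (s2 * Rt) ^ 2 := by
      have h2 : 0 < (Rt ^ 2 - lam) * s2 ^ 2 := mul_pos (by linarith) (pow_pos hs2pos 2)
      rw [hsx_sq]; linarith
    exact lt_of_pow_lt_pow_left₀ 2 (by positivity) hsq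
  have hsx_lt_Rt : Real.sin x < Rt := by
    have := mul_nonneg (by linarith : (0:ℝ) ≤ 1 - s2) hRtpos.le
    linarith [this]
  -- x < π/(2(m-2)) ≤ π/6
  have hx_lt : x < Real.pi / (2 * (m - 2)) := by
    by_contra h
    push_neg at h
    have : Rt ≤ Real.sin x := by
      rw [hRt]
      exact Real.sin_le_sin_of_le_of_le_pi_div_two (by linarith) (by linarith) h
    linarith
  have hx6 : x < Real.pi / 6 := lt_of_lt_of_le hx_lt hmarg
  have hcosx : Real.sqrt 3 / 2 < Real.cos x := by
    rw [← Real.cos_pi_div_six]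
    exact Real.cos_lt_cos_of_nonneg_of_le_pi hxpos.le (by linarith) hx6
  have hcosx0 : 0 < Real.cos x := lt_trans (by positivity) hcosx
  -- y facts
  have hyπ2 : Real.pi / 2 < y := by rw [hy]; linarith
  have hdm : d * (m - 2) < Real.pi := by
    have h := (lt_div_iff₀ (by linarith : (0:ℝ) < 2 * (m - 2))).1 hx_lt
    rw [hx] at h
    linarith [h]
  have h3d : 3 * d < Real.pi := by
    have := mul_le_mul_of_nonneg_left hm2 hd0.le
    linarith
  have hy56 : y < 5 * Real.pi / 6 := by
    rw [hy]; linarith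
  have hsiny : 1 / 2 < Real.sin y := by
    have h1 : Real.sin y = Real.sin (Real.pi - y) := (Real.sin_pi_sub y).symm
    rw [h1, ← Real.sin_pi_div_six]
    apply Real.sin_lt_sin_of_lt_of_le_pi_div_two (by linarith) (by linarith) (by linarith)
  have hcosy : Real.cos y < 0 :=
    Real.cos_neg_of_pi_div_two_lt_of_lt hyπ2 (by linarith)
  -- u - p bound
  have hRt2 : Rt ^ 2 ≤ 1 / 4 := by
    have := mul_le_mul hRt_half hRt_half hRtpos.le (by norm_num : (0:ℝ) ≤ 1/2)
    linarith [this]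
  have hlam1 : lam < 1 := by linarith
  have hup_gt : 3 / 2 * s2 ^ 2 < Real.cos d - p := by
    have heq : Real.cos d - p = (1 - lam) * (1 - p) := by rw [hcosd]; ring
    have hlam4 : lam < 1 / 4 := by linarith
    have hpos : 0 < (1 / 2 - 2 * lam) * s2 ^ 2 :=
      mul_pos (by linarith) (pow_pos hs2pos 2)
    rw [heq, hcosφ]
    linarith
  -- φ > d  and s2 > sin(π/(2m))
  have hφd : d < φ := by
    by_contra h
    push_neg at h
    have := Real.cos_le_cos_of_nonneg_of_le_pi (by linarith) hdπ.le h
    rw [← hp] at this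
    have h2 := pow_pos hs2pos 2
    linarith
  have hfrac2 : 0 < Real.pi / (2 * m) := by positivity
  have hs2_gt : Real.sin (Real.pi / (2 * m)) < s2 := by
    rw [hs2]
    apply Real.sin_lt_sin_of_lt_of_le_pi_div_two (by linarith) (by linarith)
    have : Real.pi / (2 * m) < d / 2 := by
      rw [div_lt_div_iff₀ (by linarith) (by norm_num)]
      linarith [hmd]
    linarith
  have hsstar : 0 < Real.sin (Real.pi / (2 * m)) :=
    Real.sin_pos_of_pos_of_lt_pi hfrac2 (div_lt_self hπ (by linarith))
  -- key inequality in terms of s2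
  have hKey2 : Real.pi * (1 - s2 ^ 2) < 3 * Real.sqrt 3 / 8 * m * (m - 2) * s2 := by
    have hA : (0:ℝ) < 3 * Real.sqrt 3 / 8 * m * (m - 2) :=
      mul_pos (mul_pos (by positivity) hm0) (by linarith)
    have hb1 := mul_le_mul_of_nonneg_left hs2_gt.le hA.le
    have hb2 : Real.sin (Real.pi / (2 * m)) * Real.sin (Real.pi / (2 * m)) ≤ s2 * s2 :=
      mul_le_mul hs2_gt.le hs2_gt.le hsstar.le hs2pos.le
    have hb3 := mul_le_mul_of_nonneg_left hb2 hπ.le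
    linarith [hb1, hb3]
  -- the bracket is positive
  have h1p : 1 + p = 2 * (1 - s2 ^ 2) := by rw [hcosφ]; ring
  have h2m : 2 * (m - 2) * Real.sin x < s2 * Real.pi := by
    have hmm : 2 * (m - 2) * Rt ≤ Real.pi := by
      have h := hRt_lt
      rw [le_div_iff₀ (by linarith : (0:ℝ) < 2 * (m - 2))] at h
      linarith
    have hc1 := mul_lt_mul_of_pos_left hsx_lt (by linarith : (0:ℝ) < 2 * (m - 2))
    have hc2 := mul_le_mul_of_nonneg_left hmm hs2pos.le
    linarith [hc1, hc2]
  have hT : 0 < (1 + p) * Real.sin x * Real.cos y +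
      m * (Real.cos d - p) * Real.cos x * Real.sin y := by
    have := bracket_core m Real.pi s2 (Real.sin x) (Real.cos x) (Real.sin y) (Real.cos y)
      (Real.cos d) p hm2 hm0 hπ hs2pos hs2le1 hsxpos (Real.neg_one_le_cos y)
      h1p h2m hKey2 hup_gt hcosx hsiny
    linarith [this]
  -- double angle rewrite
  have e1 : Real.sin d = 2 * Real.sin x * Real.cos x := by
    rw [show d = 2 * x by rw [hx]; ring, Real.sin_two_mul]
  have e3 : Real.sin (m * d) = 2 * Real.sin y * Real.cos y := by
    rw [show m * d = 2 * y by rw [hy]; ring, Real.sin_two_mul]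
  have e4 : Real.cos (m * d) = 2 * Real.cos y ^ 2 - 1 := by
    rw [show m * d = 2 * y by rw [hy]; ring, Real.cos_two_mul]
  have e2 : 1 + Real.cos d = 2 * Real.cos x ^ 2 := by
    have h := Real.cos_two_mul x
    rw [show 2 * x = d by rw [hx]; ring] at h
    linarith
  have hEeq : (1 + p) * Real.sin d * (1 + Real.cos (m * d)) +
      m * (Real.cos d - p) * (1 + Real.cos d) * Real.sin (m * d) =
      (4 * Real.cos x * Real.cos y) *
        ((1 + p) * Real.sin x * Real.cos y + m * (Real.cos d - p) * Real.cos x * Real.sin y) := by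
    rw [e1, e3, e4, e2]; ring
  rw [hEeq]
  exact mul_neg_of_neg_of_pos (mul_neg_of_pos_of_neg (by linarith) hcosy) hT


lemma grovP_eq (k : ℕ) (φ lam : ℝ) (hp : -1 ≤ Real.cos φ) (hp1 : Real.cos φ < 1)
    (h0 : 0 < lam) (h1 : lam < 1) :
    grovP k φ lam = Gc (2 * (k : ℝ) + 1) (Real.cos φ)
      (Real.arccos (1 - lam * (1 - Real.cos φ))) / (1 - Real.cos φ) := by
  have hθ : Real.sin (Real.arcsin (Real.sqrt lam)) ^ 2 = lam := by
    rw [Real.sin_arcsin (by linarith [Real.sqrt_nonneg lam]) (Real.sqrt_le_one.mpr h1.le)]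
    exact Real.sq_sqrt h0.le
  have h := grovP_eq' (2 * (k : ℝ) + 1) (Real.cos φ) lam hp hp1 h0 h1
  simp only [grovP]
  rw [hθ]
  exact h

set_option maxHeartbeats 2000000 in
/-- For k ≥ 2 and every φ ∈ (φ_k^min, π], the function
λ ↦ P_k^φ(λ) has no local minimum point in Λ_k = [sin²(π/(4k+2)), sin²(π/(4k−2))). -/
theorem no_local_min_in_range
    (k : ℕ) (hk : 2 ≤ k) (φ : ℝ) (hφ : φ ∈ Set.Ioc (phiMin k) Real.pi) :
    ∀ lam ∈ Set.Ico (Real.sin (Real.pi / (4 * (k : ℝ) + 2)) ^ 2)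
        (Real.sin (Real.pi / (4 * (k : ℝ) - 2)) ^ 2),
      ¬ IsLocalMin (grovP k φ) lam := by
  obtain ⟨hφmin, hφπ⟩ := hφ
  intro lam hlam hmin
  obtain ⟨hlamL, hlamR⟩ := hlam
  have hπ := Real.pi_pos
  set m : ℝ := 2 * (k : ℝ) + 1 with hm
  have hk2 : (2 : ℝ) ≤ (k : ℝ) := by exact_mod_cast hk
  have hm5 : (5 : ℝ) ≤ m := by rw [hm]; linarith
  have hφ0 : 0 < φ := lt_of_le_of_lt (Real.arccos_nonneg _) hφmin
  set p := Real.cos φ with hpdef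
  have hp1 : p < 1 := by
    have h := Real.cos_lt_cos_of_nonneg_of_le_pi le_rfl hφπ hφ0
    simpa using h
  have hpm1 : -1 ≤ p := Real.neg_one_le_cos φ
  have hc : 0 < 1 - p := by linarith
  have hc2 : 1 - p ≤ 2 := by linarith
  -- the right endpoint
  set lamR := Real.sin (Real.pi / (4 * (k : ℝ) - 2)) ^ 2 with hlamRdef
  have h4k2 : (0 : ℝ) < 4 * (k : ℝ) - 2 := by linarith
  have hangR0 : 0 < Real.pi / (4 * (k : ℝ) - 2) := by positivity
  have hangR1 : Real.pi / (4 * (k : ℝ) - 2) ≤ Real.pi / 6 := by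
    rw [div_le_div_iff₀ h4k2 (by norm_num)]
    have := mul_nonneg hπ.le (by linarith : (0:ℝ) ≤ 4 * (k:ℝ) - 8)
    linarith
  have hsinR : 0 < Real.sin (Real.pi / (4 * (k : ℝ) - 2)) :=
    Real.sin_pos_of_pos_of_lt_pi hangR0 (by linarith)
  have hsinRlt : Real.sin (Real.pi / (4 * (k : ℝ) - 2)) < 1 := by
    have h1 := Real.sin_lt hangR0
    linarith [hangR1, Real.pi_lt_d2]
  have hlamR1 : lamR < 1 := by
    rw [hlamRdef]
    nlinarith [hsinR, hsinRlt]
  have hlamL0 : 0 < Real.sin (Real.pi / (4 * (k : ℝ) + 2)) ^ 2 := by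
    have h0 : 0 < Real.pi / (4 * (k : ℝ) + 2) := by positivity
    have h1 : Real.pi / (4 * (k : ℝ) + 2) < Real.pi := by
      apply div_lt_self hπ; linarith
    exact pow_pos (Real.sin_pos_of_pos_of_lt_pi h0 h1) 2
  have hlam0 : 0 < lam := lt_of_lt_of_le hlamL0 hlamL
  have hlam1 : lam < 1 := lt_trans hlamR hlamR1
  -- the delta map
  set D : ℝ → ℝ := fun t => Real.arccos (1 - t * (1 - p)) with hD
  have hargmem : ∀ t : ℝ, 0 ≤ t → t ≤ 1 → (-1 ≤ 1 - t * (1 - p) ∧ 1 - t * (1 - p) ≤ 1) := by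
    intro t ht0 ht1
    constructor <;> nlinarith
  have hcosD : ∀ t : ℝ, 0 ≤ t → t ≤ 1 → Real.cos (D t) = 1 - t * (1 - p) := by
    intro t ht0 ht1
    exact Real.cos_arccos (hargmem t ht0 ht1).1 (hargmem t ht0 ht1).2
  have hD0 : ∀ t : ℝ, 0 < t → 0 < D t := by
    intro t ht
    exact Real.arccos_pos.2 (by nlinarith)
  have hDπ : ∀ t : ℝ, 0 ≤ t → t < 1 → D t < Real.pi := by
    intro t ht0 ht1
    refine lt_of_le_of_ne (Real.arccos_le_pi _) (fun h => ?_)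
    rw [Real.arccos_eq_pi] at h
    nlinarith
  have hDmono : ∀ s : Set ℝ, s ⊆ Set.Icc 0 1 → StrictMonoOn D s := by
    intro s hs a ha b hb hab
    have ha' := hs ha; have hb' := hs hb
    exact Real.strictAntiOn_arccos
      ⟨(hargmem b hb'.1 hb'.2).1, (hargmem b hb'.1 hb'.2).2⟩
      ⟨(hargmem a ha'.1 ha'.2).1, (hargmem a ha'.1 ha'.2).2⟩
      (by nlinarith)
  -- equality of grovP with the model function on (0,1)
  have hEq : ∀ t : ℝ, 0 < t → t < 1 → grovP k φ t = Gc m p (D t) / (1 - p) := by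
    intro t ht0 ht1
    exact grovP_eq k φ t hpm1 hp1 ht0 ht1
  -- continuity/derivative facts for the outer function
  have houter_cont : ∀ a b : ℝ, 0 < a → b < 1 → a ≤ b →
      ContinuousOn (fun dd => Gc m p dd / (1 - p)) (Set.Icc (D a) (D b)) := by
    intro a b ha hb hab
    apply ContinuousOn.div_const
    apply ContinuousOn.div
    · fun_prop
    · fun_prop
    · intro dd hdd
      have h1 : 0 < D a := hD0 a ha
      have h2 : D b < Real.pi := hDπ b (by linarith) hb
      have : Real.cos Real.pi < Real.cos dd :=
        Real.cos_lt_cos_of_nonneg_of_le_pi (le_trans h1.le hdd.1) le_rfl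
          (lt_of_le_of_lt hdd.2 h2)
      rw [Real.cos_pi] at this
      intro hzero; linarith
  rcases le_or_gt (m * D lam) Real.pi with hcase | hcase
  · -- increasing on the left of lam : contradiction with local min from the left
    set a := lam / 2 with ha
    have ha0 : 0 < a := by positivity
    have haltlam : a < lam := by rw [ha]; linarith
    have hsub : Set.Icc a lam ⊆ Set.Icc (0:ℝ) 1 := fun t ht =>
      ⟨le_trans ha0.le ht.1, le_trans ht.2 hlam1.le⟩
    have houter : StrictMonoOn (fun dd => Gc m p dd / (1 - p))
        (Set.Icc (D a) (D lam)) := by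
      apply strictMonoOn_of_deriv_pos (convex_Icc _ _)
        (houter_cont a lam ha0 hlam1 haltlam.le)
      intro dd hdd
      rw [interior_Icc] at hdd
      have hdd0 : 0 < dd := lt_trans (hD0 a ha0) hdd.1
      have hddπ : dd < Real.pi := lt_trans hdd.2 (hDπ lam hlam0.le hlam1)
      have hne : 1 + Real.cos dd ≠ 0 := by
        have h := Real.cos_lt_cos_of_nonneg_of_le_pi hdd0.le le_rfl hddπ
        rw [Real.cos_pi] at h; intro h0; linarith
      have hder := (hasDerivAt_Gc m p dd hne).div_const (1 - p)
      rw [hder.deriv]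
      have hcosgt : p < Real.cos dd := by
        have h1 : Real.cos (D lam) < Real.cos dd :=
          Real.cos_lt_cos_of_nonneg_of_le_pi hdd0.le
            (le_of_lt (hDπ lam hlam0.le hlam1)) hdd.2
        rw [hcosD lam hlam0.le hlam1.le] at h1
        nlinarith
      have hE := E_pos m p dd (by linarith) hpm1 hcosgt hdd0
        (lt_of_lt_of_le (by nlinarith [hdd.2] : m * dd < m * D lam) hcase)
      positivity
    have hmonoD := hDmono (Set.Icc a lam) hsub
    have hmaps : Set.MapsTo D (Set.Icc a lam) (Set.Icc (D a) (D lam)) := by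
      intro t ht
      exact ⟨hmonoD.monotoneOn (Set.left_mem_Icc.2 haltlam.le) ht ht.1,
        hmonoD.monotoneOn ht (Set.right_mem_Icc.2 haltlam.le) ht.2⟩
    have hcomp : StrictMonoOn (fun t => Gc m p (D t) / (1 - p)) (Set.Icc a lam) :=
      houter.comp hmonoD hmaps
    have hsm : StrictMonoOn (grovP k φ) (Set.Icc a lam) := by
      intro s hs t ht hst
      rw [hEq s (lt_of_lt_of_le ha0 hs.1) (lt_of_le_of_lt hs.2 hlam1),
        hEq t (lt_of_lt_of_le ha0 ht.1) (lt_of_le_of_lt ht.2 hlam1)]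
      exact hcomp hs ht hst
    have h1 : ∀ᶠ x in nhdsWithin lam (Set.Iio lam), grovP k φ lam ≤ grovP k φ x :=
      hmin.filter_mono nhdsWithin_le_nhds
    have h2 : Set.Ioo a lam ∈ nhdsWithin lam (Set.Iio lam) :=
      Ioo_mem_nhdsLT_of_mem ⟨haltlam, le_refl lam⟩
    have h2' : ∀ᶠ x in nhdsWithin lam (Set.Iio lam), x ∈ Set.Ioo a lam := h2
    obtain ⟨x, hx1, hx2⟩ := (h1.and h2').exists
    have : grovP k φ x < grovP k φ lam :=
      hsm ⟨hx2.1.le, hx2.2.le⟩ ⟨haltlam.le, le_refl lam⟩ hx2.2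
    linarith
  · -- decreasing on the right of lam
    set b := (lam + lamR) / 2 with hb
    have hlamb : lam < b := by rw [hb]; linarith
    have hbR : b < lamR := by rw [hb]; linarith
    have hb1 : b < 1 := lt_trans hbR hlamR1
    have hsub : Set.Icc lam b ⊆ Set.Icc (0:ℝ) 1 := fun t ht =>
      ⟨le_trans hlam0.le ht.1, le_trans ht.2 hb1.le⟩
    have hKey := key_ineq m (by
      rcases eq_or_lt_of_le hk with h | h
      · left; rw [hm, ← h]; norm_num
      · right
        have : (3 : ℝ) ≤ (k : ℝ) := by exact_mod_cast h
        rw [hm]; linarith)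
    have houter : StrictAntiOn (fun dd => Gc m p dd / (1 - p))
        (Set.Icc (D lam) (D b)) := by
      apply strictAntiOn_of_deriv_neg (convex_Icc _ _)
        (houter_cont lam b hlam0 hb1 hlamb.le)
      intro dd hdd
      rw [interior_Icc] at hdd
      have hdd0 : 0 < dd := lt_trans (hD0 lam hlam0) hdd.1
      have hddπ : dd < Real.pi := lt_trans hdd.2 (hDπ b (by linarith) hb1)
      have hne : 1 + Real.cos dd ≠ 0 := by
        have h := Real.cos_lt_cos_of_nonneg_of_le_pi hdd0.le le_rfl hddπ
        rw [Real.cos_pi] at h; intro h0; linarith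
      have hder := (hasDerivAt_Gc m p dd hne).div_const (1 - p)
      rw [hder.deriv]
      -- use E_neg with lam' = (1 - cos dd)/(1-p)
      set lam' := (1 - Real.cos dd) / (1 - p) with hlam'
      have hcosdd : Real.cos dd = 1 - lam' * (1 - p) := by
        rw [hlam']; field_simp; ring
      have hlam'0 : 0 < lam' := by
        have : Real.cos dd < 1 := by
          have h := Real.cos_lt_cos_of_nonneg_of_le_pi (le_refl 0) (by linarith) hdd0
          simpa using h
        rw [hlam']; exact div_pos (by linarith) hc
      have hlam'R : lam' < Real.sin (Real.pi / (2 * (m - 2))) ^ 2 := by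
        have h1 : Real.cos (D b) < Real.cos dd :=
          Real.cos_lt_cos_of_nonneg_of_le_pi hdd0.le
            (le_of_lt (hDπ b (by linarith) hb1)) hdd.2
        rw [hcosD b (by linarith) hb1.le] at h1
        have h2 : lam' < b := by
          rw [hcosdd] at h1
          nlinarith
        have h3 : (2 * (m - 2)) = 4 * (k : ℝ) - 2 := by rw [hm]; ring
        rw [h3]
        calc lam' < b := h2
          _ < lamR := hbR
          _ = Real.sin (Real.pi / (4 * (k : ℝ) - 2)) ^ 2 := hlamRdef
      have hmd : Real.pi < m * dd := by
        have : m * D lam < m * dd := by nlinarith [hdd.1]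
        linarith
      have hE := E_neg m φ dd lam' hm5 hφ0 hφπ hlam'0 hlam'R
        (by rw [hpdef] at hcosdd; exact hcosdd) hdd0 hddπ hmd hKey
      rw [← hpdef] at hE
      have hsq : (0:ℝ) < (1 + Real.cos dd) ^ 2 := by positivity
      exact div_neg_of_neg_of_pos (div_neg_of_neg_of_pos hE hsq) hc
    have hmonoD := hDmono (Set.Icc lam b) hsub
    have hmaps : Set.MapsTo D (Set.Icc lam b) (Set.Icc (D lam) (D b)) := by
      intro t ht
      exact ⟨hmonoD.monotoneOn (Set.left_mem_Icc.2 hlamb.le) ht ht.1,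
        hmonoD.monotoneOn ht (Set.right_mem_Icc.2 hlamb.le) ht.2⟩
    have hcomp : StrictAntiOn (fun t => Gc m p (D t) / (1 - p)) (Set.Icc lam b) := by
      intro s hs t ht hst
      exact houter (hmaps hs) (hmaps ht) (hmonoD hs ht hst)
    have hsm : StrictAntiOn (grovP k φ) (Set.Icc lam b) := by
      intro s hs t ht hst
      rw [hEq s (lt_of_lt_of_le hlam0 hs.1) (lt_of_le_of_lt hs.2 hb1),
        hEq t (lt_of_lt_of_le hlam0 ht.1) (lt_of_le_of_lt ht.2 hb1)]
      exact hcomp hs ht hst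
    have h1 : ∀ᶠ x in nhdsWithin lam (Set.Ioi lam), grovP k φ lam ≤ grovP k φ x :=
      hmin.filter_mono nhdsWithin_le_nhds
    have h2 : Set.Ioo lam b ∈ nhdsWithin lam (Set.Ioi lam) :=
      Ioo_mem_nhdsGT_of_mem ⟨le_refl lam, hlamb⟩
    have h2' : ∀ᶠ x in nhdsWithin lam (Set.Ioi lam), x ∈ Set.Ioo lam b := h2
    obtain ⟨x, hx1, hx2⟩ := (h1.and h2').exists
    have : grovP k φ x < grovP k φ lam :=
      hsm ⟨le_refl lam, hlamb.le⟩ ⟨hx2.1.le, hx2.2.le⟩ hx2.1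
    linarith
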